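/- Let α, k ∈ ℂ, let U : ℂ → ℂ be any function, and let u = (u₁,u₂) and v = (v₁,v₂) be differentiable maps ℂ → ℂ² satisfying (D(α)+k)u = 0 and (D(α)+k)v = 0 on ℂ, i.e. 2D_{z̄}u₁ + αU(z)u₂ + ku₁ = 0, αU(−z)u₁ + 2D_{z̄}u₂ + ku₂ = 0, and similarly for v. Then the Wronskian W(z) := u₁(z)v₂(z) − u₂(z)v₁(z) satisfies 2D_{z̄}W + 2kW = 0 on ℂ. -/

import Mathlib

open Complex

noncomputable section

/-- `2 D_{z̄} u = -i (∂_x u + i ∂_y u)`. -/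
def Dbar2 (u : ℂ → ℂ) : ℂ → ℂ := fun z =>
  -Complex.I * (fderiv ℝ u z 1 + Complex.I * fderiv ℝ u z Complex.I)

lemma Dbar2_mul (f g : ℂ → ℂ) (z : ℂ) (hf : DifferentiableAt ℝ f z)
    (hg : DifferentiableAt ℝ g z) :
    Dbar2 (fun w => f w * g w) z = Dbar2 f z * g z + f z * Dbar2 g z := by
  unfold Dbar2
  rw [fderiv_fun_mul hf hg]
  simp [smul_eq_mul]
  ring

lemma Dbar2_sub (f g : ℂ → ℂ) (z : ℂ) (hf : DifferentiableAt ℝ f z)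
    (hg : DifferentiableAt ℝ g z) :
    Dbar2 (fun w => f w - g w) z = Dbar2 f z - Dbar2 g z := by
  unfold Dbar2
  rw [fderiv_fun_sub hf hg]
  simp
  ring

theorem stmt8 (α k : ℂ) (U : ℂ → ℂ) (u₁ u₂ v₁ v₂ : ℂ → ℂ)
    (hu₁ : Differentiable ℝ u₁) (hu₂ : Differentiable ℝ u₂)
    (hv₁ : Differentiable ℝ v₁) (hv₂ : Differentiable ℝ v₂)
    (hueq1 : ∀ z : ℂ, Dbar2 u₁ z + α * U z * u₂ z + k * u₁ z = 0)
    (hueq2 : ∀ z : ℂ, α * U (-z) * u₁ z + Dbar2 u₂ z + k * u₂ z = 0)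
    (hveq1 : ∀ z : ℂ, Dbar2 v₁ z + α * U z * v₂ z + k * v₁ z = 0)
    (hveq2 : ∀ z : ℂ, α * U (-z) * v₁ z + Dbar2 v₂ z + k * v₂ z = 0) :
    ∀ z : ℂ, Dbar2 (fun w => u₁ w * v₂ w - u₂ w * v₁ w) z
        + 2 * k * (u₁ z * v₂ z - u₂ z * v₁ z) = 0 := by
  intro z
  rw [Dbar2_sub (fun w => u₁ w * v₂ w) (fun w => u₂ w * v₁ w) z ((hu₁ z).mul (hv₂ z)) ((hu₂ z).mul (hv₁ z)),
    Dbar2_mul _ _ z (hu₁ z) (hv₂ z), Dbar2_mul _ _ z (hu₂ z) (hv₁ z)]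
  linear_combination (v₂ z) * hueq1 z + (u₁ z) * hveq2 z - (v₁ z) * hueq2 z - (u₂ z) * hveq1 z
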